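/- With a(z,w) = sqrt(c1 + 4ε|w|²/(1+ε|z|²)²) and X₁, X₂ as above, one has [X₁, X₂] = [a ∂_w, a ∂_{w̄}] as vector fields, i.e. both brackets equal ε·(2/(1+ε|z|²)²)(w̄ ∂_{w̄} − w ∂_w). -/

import Mathlib

open Complex

/-- Wirtinger derivative `∂/∂z` (first coordinate) of `f : ℂ² → ℂ`. -/
noncomputable def dz (f : ℂ × ℂ → ℂ) (p : ℂ × ℂ) : ℂ :=
  (1 / 2) * (fderiv ℝ f p (1, 0) - Complex.I * fderiv ℝ f p (Complex.I, 0))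

/-- Wirtinger derivative `∂/∂z̄`. -/
noncomputable def dzb (f : ℂ × ℂ → ℂ) (p : ℂ × ℂ) : ℂ :=
  (1 / 2) * (fderiv ℝ f p (1, 0) + Complex.I * fderiv ℝ f p (Complex.I, 0))

/-- Wirtinger derivative `∂/∂w` (second coordinate). -/
noncomputable def dw (f : ℂ × ℂ → ℂ) (p : ℂ × ℂ) : ℂ :=
  (1 / 2) * (fderiv ℝ f p (0, 1) - Complex.I * fderiv ℝ f p (0, Complex.I))

/-- Wirtinger derivative `∂/∂w̄`. -/
noncomputable def dwb (f : ℂ × ℂ → ℂ) (p : ℂ × ℂ) : ℂ :=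
  (1 / 2) * (fderiv ℝ f p (0, 1) + Complex.I * fderiv ℝ f p (0, Complex.I))

/-- A complex vector field on `ℂ²`, given by its coefficients in the frame
`(∂_z, ∂_z̄, ∂_w, ∂_w̄)`. -/
abbrev VF := ℂ × ℂ → ℂ × ℂ × ℂ × ℂ

/-- Action of a complex vector field on a function. -/
noncomputable def appVF (X : VF) (f : ℂ × ℂ → ℂ) (p : ℂ × ℂ) : ℂ :=
  (X p).1 * dz f p + (X p).2.1 * dzb f p + (X p).2.2.1 * dw f p +
    (X p).2.2.2 * dwb f p

/-- Lie bracket of complex vector fields (in coefficients). -/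
noncomputable def bracketVF (X Y : VF) : VF := fun p =>
  (appVF X (fun q => (Y q).1) p - appVF Y (fun q => (X q).1) p,
   appVF X (fun q => (Y q).2.1) p - appVF Y (fun q => (X q).2.1) p,
   appVF X (fun q => (Y q).2.2.1) p - appVF Y (fun q => (X q).2.2.1) p,
   appVF X (fun q => (Y q).2.2.2) p - appVF Y (fun q => (X q).2.2.2) p)

/-- Conjugate of a complex vector field: coefficients are conjugated and the
frame vectors `∂_z ↔ ∂_z̄`, `∂_w ↔ ∂_w̄` are swapped. -/
noncomputable def conjVF (X : VF) : VF := fun p =>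
  ((starRingEnd ℂ) (X p).2.1, (starRingEnd ℂ) (X p).1,
   (starRingEnd ℂ) (X p).2.2.2, (starRingEnd ℂ) (X p).2.2.1)

/-- The horizontal lift `X₁ = ∂_z + ε(2wz̄)/(1+ε|z|²) ∂_w`. -/
noncomputable def X₁ (ε : ℝ) : VF := fun p =>
  (1, 0, (ε : ℂ) * 2 * p.2 * (starRingEnd ℂ) p.1 /
    ((1 + ε * Complex.normSq p.1 : ℝ) : ℂ), 0)

/-- The horizontal lift `X₂ = ∂_z̄ + ε(2w̄z)/(1+ε|z|²) ∂_w̄`. -/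
noncomputable def X₂ (ε : ℝ) : VF := fun p =>
  (0, 1, 0, (ε : ℂ) * 2 * (starRingEnd ℂ) p.2 * p.1 /
    ((1 + ε * Complex.normSq p.1 : ℝ) : ℂ))

/-- The weight function `a = sqrt (c1 + 4ε|w|²/(1+ε|z|²)²)`, as a `ℂ`-valued
function on `ℂ²`. -/
noncomputable def wfun (ε c1 : ℝ) (p : ℂ × ℂ) : ℂ :=
  ((Real.sqrt (c1 + ε * 4 * Complex.normSq p.2 /
    (1 + ε * Complex.normSq p.1) ^ 2) : ℝ) : ℂ)

lemma dz_const (c : ℂ) (p : ℂ × ℂ) : dz (fun _ => c) p = 0 := by simp [dz]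
lemma dzb_const (c : ℂ) (p : ℂ × ℂ) : dzb (fun _ => c) p = 0 := by simp [dzb]
lemma dw_const (c : ℂ) (p : ℂ × ℂ) : dw (fun _ => c) p = 0 := by simp [dw]
lemma dwb_const (c : ℂ) (p : ℂ × ℂ) : dwb (fun _ => c) p = 0 := by simp [dwb]

lemma wirtA (ε : ℝ) (p : ℂ × ℂ) (hz : 0 < 1 + ε * Complex.normSq p.1) :
    dzb (fun q : ℂ × ℂ => (ε : ℂ) * 2 * q.2 * (starRingEnd ℂ) q.1 /
        ((1 + ε * Complex.normSq q.1 : ℝ) : ℂ)) p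
      = (ε : ℂ) * 2 * p.2 / ((1 + ε * Complex.normSq p.1 : ℝ) : ℂ) ^ 2 ∧
    dwb (fun q : ℂ × ℂ => (ε : ℂ) * 2 * q.2 * (starRingEnd ℂ) q.1 /
        ((1 + ε * Complex.normSq q.1 : ℝ) : ℂ)) p = 0 := by
  have hne : ((1 + ε * Complex.normSq p.1 : ℝ) : ℂ) ≠ 0 := by
    exact_mod_cast ne_of_gt hz
  have e0 : (1 + (ε : ℂ) * (p.1 * (starRingEnd ℂ) p.1))
      = ((1 + ε * Complex.normSq p.1 : ℝ) : ℂ) := by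
    rw [Complex.mul_conj]; push_cast; ring
  have hden0 : (1 + (ε : ℂ) * (p.1 * (starRingEnd ℂ) p.1)) ≠ 0 := e0 ▸ hne
  have efun : (fun q : ℂ × ℂ => (ε : ℂ) * 2 * q.2 * (starRingEnd ℂ) q.1 /
        ((1 + ε * Complex.normSq q.1 : ℝ) : ℂ))
      = fun q : ℂ × ℂ => ((ε : ℂ) * 2 * q.2 * (starRingEnd ℂ) q.1) *
        (1 + (ε : ℂ) * (q.1 * (starRingEnd ℂ) q.1))⁻¹ := by
    funext q; rw [div_eq_mul_inv, Complex.mul_conj]; push_cast; ring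
  have h1 : HasFDerivAt (fun q : ℂ × ℂ => q.1) (ContinuousLinearMap.fst ℝ ℂ ℂ) p :=
    hasFDerivAt_fst
  have h2 : HasFDerivAt (fun q : ℂ × ℂ => q.2) (ContinuousLinearMap.snd ℝ ℂ ℂ) p :=
    hasFDerivAt_snd
  have hc1 : HasFDerivAt (fun q : ℂ × ℂ => (starRingEnd ℂ) q.1)
      (Complex.conjCLE.toContinuousLinearMap.comp (ContinuousLinearMap.fst ℝ ℂ ℂ)) p :=
    Complex.conjCLE.hasFDerivAt.comp p hasFDerivAt_fst
  have hnum := (h2.const_mul ((ε : ℂ) * 2)).mul hc1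
  have hden := ((h1.mul hc1).const_mul (ε : ℂ)).const_add 1
  have hinv := (hasFDerivAt_inv' (𝕜 := ℝ) hden0).comp p hden
  have hA : HasFDerivAt (fun q : ℂ × ℂ => ((ε : ℂ) * 2 * q.2 * (starRingEnd ℂ) q.1) *
      (1 + (ε : ℂ) * (q.1 * (starRingEnd ℂ) q.1))⁻¹) _ p := hnum.mul hinv
  constructor
  · rw [efun]
    simp only [dzb]
    rw [hA.fderiv]
    simp only [ContinuousLinearMap.add_apply, ContinuousLinearMap.smul_apply,
      ContinuousLinearMap.coe_comp', Function.comp_apply, ContinuousLinearMap.coe_fst',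
      ContinuousLinearMap.coe_snd', ContinuousLinearMap.neg_apply,
      ContinuousLinearMap.mulLeftRight_apply, ContinuousLinearEquiv.coe_coe,
      Complex.conjCLE_apply, map_one, Complex.conj_I, smul_eq_mul, map_mul, Pi.mul_apply]
    simp only [← e0] at hne ⊢
    field_simp
    ring_nf
    simp only [Complex.I_sq]
    ring
  · rw [efun]
    simp only [dwb]
    rw [hA.fderiv]
    simp
    ring_nf
    simp only [Complex.I_sq]
    ring

lemma wirtB (ε : ℝ) (p : ℂ × ℂ) (hz : 0 < 1 + ε * Complex.normSq p.1) :
    dz (fun q : ℂ × ℂ => (ε : ℂ) * 2 * (starRingEnd ℂ) q.2 * q.1 /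
        ((1 + ε * Complex.normSq q.1 : ℝ) : ℂ)) p
      = (ε : ℂ) * 2 * (starRingEnd ℂ) p.2 / ((1 + ε * Complex.normSq p.1 : ℝ) : ℂ) ^ 2 ∧
    dw (fun q : ℂ × ℂ => (ε : ℂ) * 2 * (starRingEnd ℂ) q.2 * q.1 /
        ((1 + ε * Complex.normSq q.1 : ℝ) : ℂ)) p = 0 := by
  have hne : ((1 + ε * Complex.normSq p.1 : ℝ) : ℂ) ≠ 0 := by
    exact_mod_cast ne_of_gt hz
  have e0 : (1 + (ε : ℂ) * (p.1 * (starRingEnd ℂ) p.1))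
      = ((1 + ε * Complex.normSq p.1 : ℝ) : ℂ) := by
    rw [Complex.mul_conj]; push_cast; ring
  have hden0 : (1 + (ε : ℂ) * (p.1 * (starRingEnd ℂ) p.1)) ≠ 0 := e0 ▸ hne
  have efun : (fun q : ℂ × ℂ => (ε : ℂ) * 2 * (starRingEnd ℂ) q.2 * q.1 /
        ((1 + ε * Complex.normSq q.1 : ℝ) : ℂ))
      = fun q : ℂ × ℂ => ((ε : ℂ) * 2 * (starRingEnd ℂ) q.2 * q.1) *
        (1 + (ε : ℂ) * (q.1 * (starRingEnd ℂ) q.1))⁻¹ := by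
    funext q; rw [div_eq_mul_inv, Complex.mul_conj]; push_cast; ring
  have h1 : HasFDerivAt (fun q : ℂ × ℂ => q.1) (ContinuousLinearMap.fst ℝ ℂ ℂ) p :=
    hasFDerivAt_fst
  have hc1 : HasFDerivAt (fun q : ℂ × ℂ => (starRingEnd ℂ) q.1)
      (Complex.conjCLE.toContinuousLinearMap.comp (ContinuousLinearMap.fst ℝ ℂ ℂ)) p :=
    Complex.conjCLE.hasFDerivAt.comp p hasFDerivAt_fst
  have hc2 : HasFDerivAt (fun q : ℂ × ℂ => (starRingEnd ℂ) q.2)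
      (Complex.conjCLE.toContinuousLinearMap.comp (ContinuousLinearMap.snd ℝ ℂ ℂ)) p :=
    Complex.conjCLE.hasFDerivAt.comp p hasFDerivAt_snd
  have hnum := (hc2.const_mul ((ε : ℂ) * 2)).mul h1
  have hden := ((h1.mul hc1).const_mul (ε : ℂ)).const_add 1
  have hinv := (hasFDerivAt_inv' (𝕜 := ℝ) hden0).comp p hden
  have hB : HasFDerivAt (fun q : ℂ × ℂ => ((ε : ℂ) * 2 * (starRingEnd ℂ) q.2 * q.1) *
      (1 + (ε : ℂ) * (q.1 * (starRingEnd ℂ) q.1))⁻¹) _ p := hnum.mul hinv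
  constructor
  · rw [efun]
    simp only [dz]
    rw [hB.fderiv]
    simp only [ContinuousLinearMap.add_apply, ContinuousLinearMap.smul_apply,
      ContinuousLinearMap.coe_comp', Function.comp_apply, ContinuousLinearMap.coe_fst',
      ContinuousLinearMap.coe_snd', ContinuousLinearMap.neg_apply,
      ContinuousLinearMap.mulLeftRight_apply, ContinuousLinearEquiv.coe_coe,
      Complex.conjCLE_apply, map_one, Complex.conj_I, smul_eq_mul, map_mul, Pi.mul_apply, map_zero]
    simp only [← e0] at hne ⊢
    field_simp
    ring_nf
    simp only [Complex.I_sq]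
    ring
  · rw [efun]
    simp only [dw]
    rw [hB.fderiv]
    simp
    ring_nf
    simp only [Complex.I_sq]
    ring

set_option maxHeartbeats 2000000 in
lemma wirtW (ε c1 : ℝ) (p : ℂ × ℂ) (hz : 0 < 1 + ε * Complex.normSq p.1)
    (ha : 0 < c1 + ε * 4 * Complex.normSq p.2 / (1 + ε * Complex.normSq p.1) ^ 2) :
    wfun ε c1 p * dw (wfun ε c1) p
      = (ε : ℂ) * 2 * (starRingEnd ℂ) p.2 / ((1 + ε * Complex.normSq p.1 : ℝ) : ℂ) ^ 2 ∧
    wfun ε c1 p * dwb (wfun ε c1) p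
      = (ε : ℂ) * 2 * p.2 / ((1 + ε * Complex.normSq p.1 : ℝ) : ℂ) ^ 2 := by
  set gA : ℂ × ℂ → ℝ := fun q =>
    c1 + ε * 4 * (q.2.re * q.2.re + q.2.im * q.2.im) *
      ((1 + ε * (q.1.re * q.1.re + q.1.im * q.1.im)) *
       (1 + ε * (q.1.re * q.1.re + q.1.im * q.1.im)))⁻¹ with hgA
  have hgval : ∀ q : ℂ × ℂ, gA q = c1 + ε * 4 * Complex.normSq q.2 /
      (1 + ε * Complex.normSq q.1) ^ 2 := by
    intro q
    simp only [hgA, Complex.normSq_apply, pow_two, div_eq_mul_inv]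
  have egf : wfun ε c1 = fun q => ((Real.sqrt (gA q) : ℝ) : ℂ) := by
    funext q; rw [wfun, hgval q]
  have hE0 : (1 + ε * (p.1.re * p.1.re + p.1.im * p.1.im)) ≠ 0 := by
    rw [← Complex.normSq_apply]; exact ne_of_gt hz
  have hEE0 : ((1 + ε * (p.1.re * p.1.re + p.1.im * p.1.im)) *
      (1 + ε * (p.1.re * p.1.re + p.1.im * p.1.im))) ≠ 0 := mul_ne_zero hE0 hE0
  have hgp0 : gA p ≠ 0 := by rw [hgval p]; exact ne_of_gt ha
  have hre1 : HasFDerivAt (fun q : ℂ × ℂ => q.1.re)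
      (Complex.reCLM.comp (ContinuousLinearMap.fst ℝ ℂ ℂ)) p :=
    Complex.reCLM.hasFDerivAt.comp p hasFDerivAt_fst
  have him1 : HasFDerivAt (fun q : ℂ × ℂ => q.1.im)
      (Complex.imCLM.comp (ContinuousLinearMap.fst ℝ ℂ ℂ)) p :=
    Complex.imCLM.hasFDerivAt.comp p hasFDerivAt_fst
  have hre2 : HasFDerivAt (fun q : ℂ × ℂ => q.2.re)
      (Complex.reCLM.comp (ContinuousLinearMap.snd ℝ ℂ ℂ)) p :=
    Complex.reCLM.hasFDerivAt.comp p hasFDerivAt_snd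
  have him2 : HasFDerivAt (fun q : ℂ × ℂ => q.2.im)
      (Complex.imCLM.comp (ContinuousLinearMap.snd ℝ ℂ ℂ)) p :=
    Complex.imCLM.hasFDerivAt.comp p hasFDerivAt_snd
  have hns1 := (hre1.mul hre1).add (him1.mul him1)
  have hE := (hns1.const_mul ε).const_add 1
  have hEE := hE.mul hE
  have hinv := (hasFDerivAt_inv' (𝕜 := ℝ) hEE0).comp p hEE
  have hns2 := (hre2.mul hre2).add (him2.mul him2)
  have hg : HasFDerivAt gA _ p := (((hns2.const_mul (ε * 4)).mul hinv).const_add c1)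
  have hs := (Real.hasDerivAt_sqrt hgp0).comp_hasFDerivAt p hg
  have hW : HasFDerivAt (fun q : ℂ × ℂ => ((Real.sqrt (gA q) : ℝ) : ℂ)) _ p :=
    Complex.ofRealCLM.hasFDerivAt.comp p hs
  have hs0 : Real.sqrt (gA p) ≠ 0 := by
    refine ne_of_gt (Real.sqrt_pos.mpr ?_); rw [hgval p]; exact ha
  have hcfd : ∀ v : ℂ × ℂ, fderiv ℝ (fun q : ℂ × ℂ => ((Real.sqrt (gA q) : ℝ) : ℂ)) p v
      = ((fderiv ℝ ((fun x => Real.sqrt x) ∘ gA) p v : ℝ) : ℂ) := by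
    intro v
    rw [hW.fderiv, hs.fderiv]
    simp
  have key1 : fderiv ℝ ((fun x => Real.sqrt x) ∘ gA) p (0, 1)
      = 1 / (2 * Real.sqrt (gA p)) * (ε * 4 * (2 * p.2.re) *
        ((1 + ε * (p.1.re * p.1.re + p.1.im * p.1.im)) *
         (1 + ε * (p.1.re * p.1.re + p.1.im * p.1.im)))⁻¹) := by
    rw [hs.fderiv]
    simp only [ContinuousLinearMap.add_apply, ContinuousLinearMap.smul_apply,
      ContinuousLinearMap.coe_comp', Function.comp_apply, ContinuousLinearMap.coe_fst',
      ContinuousLinearMap.coe_snd', ContinuousLinearMap.neg_apply,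
      ContinuousLinearMap.mulLeftRight_apply, Complex.reCLM_apply, Complex.imCLM_apply,
      smul_eq_mul, Complex.one_re, Complex.one_im, Complex.I_re, Complex.I_im,
      Complex.zero_re, Complex.zero_im, mul_zero, zero_mul, add_zero, zero_add,
      mul_one, neg_zero, neg_mul, mul_neg, zero_div, neg_neg, Pi.mul_apply, Pi.add_apply]
    ring
  have key2 : fderiv ℝ ((fun x => Real.sqrt x) ∘ gA) p (0, Complex.I)
      = 1 / (2 * Real.sqrt (gA p)) * (ε * 4 * (2 * p.2.im) *
        ((1 + ε * (p.1.re * p.1.re + p.1.im * p.1.im)) *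
         (1 + ε * (p.1.re * p.1.re + p.1.im * p.1.im)))⁻¹) := by
    rw [hs.fderiv]
    simp only [ContinuousLinearMap.add_apply, ContinuousLinearMap.smul_apply,
      ContinuousLinearMap.coe_comp', Function.comp_apply, ContinuousLinearMap.coe_fst',
      ContinuousLinearMap.coe_snd', ContinuousLinearMap.neg_apply,
      ContinuousLinearMap.mulLeftRight_apply, Complex.reCLM_apply, Complex.imCLM_apply,
      smul_eq_mul, Complex.one_re, Complex.one_im, Complex.I_re, Complex.I_im,
      Complex.zero_re, Complex.zero_im, mul_zero, zero_mul, add_zero, zero_add,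
      mul_one, neg_zero, neg_mul, mul_neg, zero_div, neg_neg, Pi.mul_apply, Pi.add_apply]
    ring
  have e2 : ((1 + ε * Complex.normSq p.1 : ℝ) : ℂ) ^ 2
      = (((1 + ε * (p.1.re * p.1.re + p.1.im * p.1.im)) *
         (1 + ε * (p.1.re * p.1.re + p.1.im * p.1.im)) : ℝ) : ℂ) := by
    push_cast [Complex.normSq_apply]; ring
  have hEEc : (((1 + ε * (p.1.re * p.1.re + p.1.im * p.1.im)) *
      (1 + ε * (p.1.re * p.1.re + p.1.im * p.1.im)) : ℝ) : ℂ) ≠ 0 := by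
    exact_mod_cast hEE0
  have hsc : ((Real.sqrt (gA p) : ℝ) : ℂ) ≠ 0 := by exact_mod_cast hs0
  have hconjw : (starRingEnd ℂ) p.2 = (p.2.re : ℂ) - (p.2.im : ℂ) * Complex.I := by
    simp [Complex.ext_iff]
  have hw2 : (p.2 : ℂ) = (p.2.re : ℂ) + (p.2.im : ℂ) * Complex.I :=
    (Complex.re_add_im p.2).symm
  constructor
  · rw [egf]
    beta_reduce
    simp only [dw, hcfd, key1, key2]
    rw [hconjw, e2]
    generalize hS : Real.sqrt (gA p) = s at hsc ⊢
    generalize hEg : ((1 + ε * (p.1.re * p.1.re + p.1.im * p.1.im)) *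
      (1 + ε * (p.1.re * p.1.re + p.1.im * p.1.im))) = E at hEEc ⊢
    push_cast
    field_simp
    ring
  · rw [egf]
    beta_reduce
    simp only [dwb, hcfd, key1, key2]
    rw [hw2, e2]
    generalize hS : Real.sqrt (gA p) = s at hsc ⊢
    generalize hEg : ((1 + ε * (p.1.re * p.1.re + p.1.im * p.1.im)) *
      (1 + ε * (p.1.re * p.1.re + p.1.im * p.1.im))) = E at hEEc ⊢
    push_cast
    field_simp
    simp only [Complex.add_re, Complex.add_im, Complex.ofReal_re, Complex.ofReal_im,
      Complex.mul_re, Complex.mul_im, Complex.I_re, Complex.I_im, mul_zero, mul_one,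
      sub_zero, zero_mul, add_zero, zero_add]
    ring

/-- `[X₁, X₂] = [a ∂_w, a ∂_w̄]`, both equal to
`ε (2/(1+ε|z|²)²)(w̄ ∂_w̄ − w ∂_w)`. -/
theorem stmt_10 (ε c1 : ℝ) (hε : ε = 1 ∨ ε = -1) (hc1 : 0 < c1) (p : ℂ × ℂ)
    (hz : 0 < 1 + ε * Complex.normSq p.1)
    (ha : 0 < c1 + ε * 4 * Complex.normSq p.2 / (1 + ε * Complex.normSq p.1) ^ 2) :
    bracketVF (X₁ ε) (X₂ ε) p =
      bracketVF (fun q => (0, 0, wfun ε c1 q, 0))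
        (fun q => (0, 0, 0, wfun ε c1 q)) p ∧
    bracketVF (X₁ ε) (X₂ ε) p =
      (0, 0,
       -((ε : ℂ) * (2 / ((1 + ε * Complex.normSq p.1 : ℝ) : ℂ) ^ 2) * p.2),
       (ε : ℂ) * (2 / ((1 + ε * Complex.normSq p.1 : ℝ) : ℂ) ^ 2) *
         (starRingEnd ℂ) p.2) := by
  have hA := wirtA ε p hz
  have hB := wirtB ε p hz
  have hW := wirtW ε c1 p hz ha
  have hMain : bracketVF (X₁ ε) (X₂ ε) p =
      (0, 0,
       -((ε : ℂ) * (2 / ((1 + ε * Complex.normSq p.1 : ℝ) : ℂ) ^ 2) * p.2),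
       (ε : ℂ) * (2 / ((1 + ε * Complex.normSq p.1 : ℝ) : ℂ) ^ 2) *
         (starRingEnd ℂ) p.2) := by
    simp only [bracketVF, appVF, X₁, X₂]
    simp only [dz_const, dzb_const, dw_const, dwb_const, hA.1, hA.2, hB.1, hB.2,
      Prod.mk.injEq]
    refine ⟨by ring, by ring, by ring, by ring⟩
  have hSecond : bracketVF (fun q : ℂ × ℂ => ((0:ℂ), (0:ℂ), wfun ε c1 q, (0:ℂ)))
      (fun q : ℂ × ℂ => ((0:ℂ), (0:ℂ), (0:ℂ), wfun ε c1 q)) p =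
      (0, 0,
       -((ε : ℂ) * (2 / ((1 + ε * Complex.normSq p.1 : ℝ) : ℂ) ^ 2) * p.2),
       (ε : ℂ) * (2 / ((1 + ε * Complex.normSq p.1 : ℝ) : ℂ) ^ 2) *
         (starRingEnd ℂ) p.2) := by
    simp only [bracketVF, appVF]
    simp only [dz_const, dzb_const, dw_const, dwb_const, Prod.mk.injEq]
    refine ⟨by ring, by ring, by linear_combination -hW.2, by linear_combination hW.1⟩
  exact ⟨hMain.trans hSecond.symm, hMain⟩
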